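/- The Kustaanheimo-Stiefel map restricted to the cotangent bundle of a Levi-Civita plane reduces to the Levi-Civita map: with z = c₁r₁ + c₂r₂ and w = c₃r₁ + c₄r₂ in a Levi-Civita plane with orthonormal basis r₁, r₂, K.S.(z,w) = ((c₁²−c₂²) r̄₁ir₁ + 2c₁c₂ r̄₁ir₂, ((c₁c₃−c₂c₄) r̄₁ir₁ + (c₁c₄+c₂c₃) r̄₁ir₂)/(2(c₁²+c₂²))), which under the complex identifications r₁ ∼ r̄₁ir₁ ∼ 1, r₂ ∼ r̄₁ir₂ ∼ i equals the Levi-Civita transformation (z,w) ↦ (z², w/(2z̄)) on ℂ×ℂ. -/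

import Mathlib

set_option maxHeartbeats 1000000


/-- The quaternion unit `i`. -/
def qi : Quaternion ℝ := ⟨0,1,0,0⟩

@[simp] lemma qi_re : qi.re = 0 := rfl
@[simp] lemma qi_imI : qi.imI = 1 := rfl
@[simp] lemma qi_imJ : qi.imJ = 0 := rfl
@[simp] lemma qi_imK : qi.imK = 0 := rfl

/-- The Kustaanheimo-Stiefel map (z,w) ↦ (Q,P) = (z̄ i z, z̄ i w / (2|z|²)). -/
noncomputable def KS (p : Quaternion ℝ × Quaternion ℝ) : Quaternion ℝ × Quaternion ℝ :=
  (star p.1 * qi * p.1, ((2 * ‖p.1‖ ^ 2)⁻¹ : ℝ) • (star p.1 * qi * p.2))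

lemma star_eq_neg_of_re_eq_zero {q : Quaternion ℝ} (h : q.re = 0) : star q = -q := by
  ext <;> simp [h]

lemma re_mul_comm (p q : Quaternion ℝ) : (p * q).re = (q * p).re := by
  simp [Quaternion.re_mul]; ring

lemma anticomm {p q : Quaternion ℝ} (hp : p.re = 0) (hq : q.re = 0)
    (hpq : (p * q).re = 0) : p * q = -(q * p) := by
  have h1 : star (p * q) = -(p * q) := star_eq_neg_of_re_eq_zero hpq
  rw [star_mul, star_eq_neg_of_re_eq_zero hp, star_eq_neg_of_re_eq_zero hq,
    neg_mul_neg] at h1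
  rw [h1, neg_neg]

theorem KS_restricts_to_LC (r₁ r₂ : Quaternion ℝ)
    (h₁ : ‖r₁‖ = 1) (h₂ : ‖r₂‖ = 1)
    (hBL : (star r₁ * qi * r₂).re = 0) (horth : (star r₁ * r₂).re = 0)
    (c₁ c₂ c₃ c₄ : ℝ) (hz : (c₁, c₂) ≠ 0) :
    KS (c₁ • r₁ + c₂ • r₂, c₃ • r₁ + c₄ • r₂)
      = ((c₁ ^ 2 - c₂ ^ 2) • (star r₁ * qi * r₁)
            + (2 * c₁ * c₂) • (star r₁ * qi * r₂),
         ((2 * (c₁ ^ 2 + c₂ ^ 2))⁻¹ : ℝ) •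
            ((c₁ * c₃ - c₂ * c₄) • (star r₁ * qi * r₁)
              + (c₁ * c₄ + c₂ * c₃) • (star r₁ * qi * r₂))) := by
  have hn1 : Quaternion.normSq r₁ = 1 := by
    rw [Quaternion.normSq_eq_norm_mul_self, h₁]; norm_num
  have hn2 : Quaternion.normSq r₂ = 1 := by
    rw [Quaternion.normSq_eq_norm_mul_self, h₂]; norm_num
  set a : Quaternion ℝ := star r₁ * qi * r₁ with ha_def
  set u : Quaternion ℝ := star r₁ * r₂ with hu_def
  have ha_re : a.re = 0 := by
    rw [ha_def, re_mul_comm, ← mul_assoc, Quaternion.self_mul_star, hn1]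
    simp [Quaternion.re_mul]
  have hru : r₁ * u = r₂ := by
    rw [hu_def, ← mul_assoc, Quaternion.self_mul_star, hn1]
    simp
  have he₂ : a * u = star r₁ * qi * r₂ := by
    rw [ha_def, mul_assoc (star r₁ * qi), hru]
  have hanti : a * u = -(u * a) := anticomm ha_re horth (by rw [he₂]; exact hBL)
  have hstar_u : star u = -u := star_eq_neg_of_re_eq_zero horth
  have hnu : Quaternion.normSq u = 1 := by
    rw [hu_def, map_mul, Quaternion.normSq_star, hn1, hn2]; norm_num
  have hu2 : u * u = -1 := by
    have h := Quaternion.star_mul_self u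
    rw [hstar_u, hnu, neg_mul] at h
    rw [← neg_neg (u * u), h]; norm_num
  have hr2qr2 : star r₂ * qi * r₂ = -a := by
    have step1 : star r₂ * qi * r₂ = star u * (a * u) := by
      rw [← hru, star_mul]; simp only [ha_def, mul_assoc]
    rw [step1, hanti, hstar_u, neg_mul_neg, ← mul_assoc, hu2, neg_one_mul]
  have hr2qr1 : star r₂ * qi * r₁ = star r₁ * qi * r₂ := by
    have h := star_eq_neg_of_re_eq_zero hBL
    rw [star_mul, star_mul, star_star] at h
    have hqi : star qi = -qi := star_eq_neg_of_re_eq_zero rfl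
    rw [hqi, neg_mul, mul_neg, neg_inj, ← mul_assoc] at h
    exact h
  -- cross term for the norm computation
  have hcross : (r₁ * star r₂).re = 0 := by
    rw [re_mul_comm]
    have : star r₂ * r₁ = star (star r₁ * r₂) := by rw [star_mul, star_star]
    rw [this, Quaternion.re_star]
    exact horth
  have hnormz : ‖c₁ • r₁ + c₂ • r₂‖ ^ 2 = c₁ ^ 2 + c₂ ^ 2 := by
    rw [sq, ← Quaternion.normSq_eq_norm_mul_self, Quaternion.normSq_add]
    have e1 : Quaternion.normSq (c₁ • r₁) = c₁ ^ 2 := by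
      rw [← Quaternion.coe_mul_eq_smul, map_mul, Quaternion.normSq_coe, hn1]; ring
    have e2 : Quaternion.normSq (c₂ • r₂) = c₂ ^ 2 := by
      rw [← Quaternion.coe_mul_eq_smul, map_mul, Quaternion.normSq_coe, hn2]; ring
    have e3 : ((c₁ • r₁) * star (c₂ • r₂)).re = 0 := by
      rw [Quaternion.star_smul, smul_mul_assoc, mul_smul_comm]
      simp [hcross]
    rw [e1, e2, e3]; ring
  have expand : ∀ d₁ d₂ : ℝ,
      star (c₁ • r₁ + c₂ • r₂) * qi * (d₁ • r₁ + d₂ • r₂)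
        = (c₁ * d₁) • (star r₁ * qi * r₁) + (c₁ * d₂) • (star r₁ * qi * r₂)
          + (c₂ * d₁) • (star r₂ * qi * r₁) + (c₂ * d₂) • (star r₂ * qi * r₂) := by
    intro d₁ d₂
    simp only [star_add, Quaternion.star_smul, add_mul, mul_add, smul_mul_assoc,
      mul_smul_comm, smul_smul]
    module
  have key1 : star (c₁ • r₁ + c₂ • r₂) * qi * (c₁ • r₁ + c₂ • r₂)
      = (c₁ ^ 2 - c₂ ^ 2) • (star r₁ * qi * r₁) + (2 * c₁ * c₂) • (star r₁ * qi * r₂) := by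
    rw [expand, hr2qr1, hr2qr2, ← ha_def]
    module
  have key2 : star (c₁ • r₁ + c₂ • r₂) * qi * (c₃ • r₁ + c₄ • r₂)
      = (c₁ * c₃ - c₂ * c₄) • (star r₁ * qi * r₁)
        + (c₁ * c₄ + c₂ * c₃) • (star r₁ * qi * r₂) := by
    rw [expand, hr2qr1, hr2qr2, ← ha_def]
    module
  unfold KS
  simp only [hnormz, key1, key2]
  rfl
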